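/- In a fair valuation structure, for all valuations α and β, either (α ⊕ β) ⊖ β = α, or (α ⊕ β) ⊖ β = (α ⊕ β) ⊖ (α ⊕ β), which is an absorbing element strictly greater than α. -/
import Mathlib


structure FairVS (E : Type*) [LinearOrder E] where
  op : E → E → E
  bot : E
  top : E
  bot_le : ∀ a : E, bot ≤ a
  le_top : ∀ a : E, a ≤ top
  comm : ∀ a b : E, op a b = op b a
  assoc : ∀ a b c : E, op (op a b) c = op a (op b c)
  iden : ∀ a : E, op a bot = a
  mono : ∀ a b c : E, b ≤ a → op b c ≤ op a c
  absorb : ∀ a : E, op a top = top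
  sub : E → E → E
  sub_add : ∀ a b : E, a ≤ b → op (sub b a) a = b
  sub_max : ∀ a b g : E, a ≤ b → op g a = b → g ≤ sub b a

lemma FairVS.le_op_left {E : Type*} [LinearOrder E] (S : FairVS E) (a b : E) :
    a ≤ S.op b a := by
  have h := S.mono b S.bot a (S.bot_le b)
  rwa [S.comm S.bot a, S.iden] at h

lemma FairVS.le_op_right {E : Type*} [LinearOrder E] (S : FairVS E) (a b : E) :
    a ≤ S.op a b := by
  rw [S.comm]; exact S.le_op_left a b

theorem stmt8 {E : Type*} [LinearOrder E] (S : FairVS E) (α β : E) :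
    S.sub (S.op α β) β = α ∨
    (S.sub (S.op α β) β = S.sub (S.op α β) (S.op α β) ∧
      S.op (S.sub (S.op α β) (S.op α β)) (S.sub (S.op α β) (S.op α β)) =
        S.sub (S.op α β) (S.op α β) ∧
      α < S.sub (S.op α β) (S.op α β)) := by
  set γ := S.op α β with hγ
  have hβγ : β ≤ γ := by rw [hγ]; exact S.le_op_left β α
  set d := S.sub γ β with hd
  have hdβ : S.op d β = γ := S.sub_add β γ hβγ
  have hαd : α ≤ d := S.sub_max β γ α hβγ hγ.symm
  rcases eq_or_lt_of_le hαd with h | h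
  · left; exact h.symm
  · right
    set x := S.sub d α with hxdef
    have hx : S.op x α = d := S.sub_add α d h.le
    have hxγ : S.op x γ = γ := by
      rw [hγ, ← S.assoc, hx, hdβ]
    have hdx : S.op d x = d := by
      refine le_antisymm (S.sub_max β γ (S.op d x) hβγ ?_) (S.le_op_right d x)
      rw [S.comm d x, S.assoc, hdβ, hxγ]
    have hxx : S.op x x = x := by
      refine le_antisymm (S.sub_max α d (S.op x x) h.le ?_) (S.le_op_right x x)
      rw [S.assoc, hx, S.comm x d, hdx]
    have hαx : α ≤ x := by
      by_contra hc
      push_neg at hc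
      have hs : S.op (S.sub α x) x = α := S.sub_add x α hc.le
      have : d = α := by
        rw [← hx, ← hs, S.comm (S.sub α x) x, ← S.assoc,
          S.comm x x, hxx, S.comm x (S.sub α x), hs]
      exact absurd (this ▸ h) (lt_irrefl α)
    have hαγ : S.op α γ = γ := by
      refine le_antisymm ?_ (S.le_op_left γ α)
      calc S.op α γ ≤ S.op x γ := S.mono x α γ hαx
        _ = γ := hxγ
    have hdγ : S.op d γ = γ := by
      rw [← hx, S.assoc, hαγ, hxγ]
    have hdd : S.op d d = d := by
      refine le_antisymm (S.sub_max β γ (S.op d d) hβγ ?_) (S.le_op_right d d)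
      rw [S.assoc, hdβ, hdγ]
    have he : S.op (S.sub γ γ) γ = γ := S.sub_add γ γ le_rfl
    have hed : S.sub γ γ ≤ d := by
      have h1 : S.op (S.op (S.sub γ γ) α) β = γ := by
        rw [S.assoc, ← hγ, he]
      exact le_trans (S.le_op_right (S.sub γ γ) α) (S.sub_max β γ _ hβγ h1)
    have hde : d ≤ S.sub γ γ := S.sub_max γ γ d le_rfl hdγ
    have hedq : d = S.sub γ γ := le_antisymm hde hed
    exact ⟨hedq, hedq ▸ hdd, hedq ▸ h⟩
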